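/- Let (Γ, T, n⊥, n, κ_g, τ_g) be a closed asymptotic curve in ℝ³ and let u be a unit vector such that κ_g(t)·⟨n(t), u⟩ ≠ 0 for all t (equivalently, the planar projection Γ_u has nonvanishing curvature, i.e. no inflections). Then for every point p ∈ ℝ³ there exists t ∈ [0, 2π] with ⟨Γ(t) − p, T(t) × u⟩ = 0; that is, the tangent lines of Γ_u cover the whole plane orthogonal to u, so Γ_u is not locally star-shaped. (Theorem 1.3, Darboux-frame version.) -/

import Mathlib

open Real intervalIntegral

noncomputable section

/-- The cross product on `EuclideanSpace ℝ (Fin 3)`. -/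
def cross3 (a b : EuclideanSpace ℝ (Fin 3)) : EuclideanSpace ℝ (Fin 3) :=
  (EuclideanSpace.equiv (Fin 3) ℝ).symm
    (crossProduct ((EuclideanSpace.equiv (Fin 3) ℝ) a) ((EuclideanSpace.equiv (Fin 3) ℝ) b))

lemma cross3_apply' (a b : EuclideanSpace ℝ (Fin 3)) :
    cross3 a b = ![a 1 * b 2 - a 2 * b 1, a 2 * b 0 - a 0 * b 2, a 0 * b 1 - a 1 * b 0] := by
  simp [cross3, cross_apply]

lemma inner3' (x y : EuclideanSpace ℝ (Fin 3)) :
    (inner ℝ x y : ℝ) = x 0 * y 0 + x 1 * y 1 + x 2 * y 2 := by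
  simp [PiLp.inner_apply, Fin.sum_univ_three, RCLike.inner_apply, mul_comm]

/-- Key vector identity: for unit `a` orthogonal to `b`,
`⟨a,u⟩ (a×b) - ⟨a×b,u⟩ a + b×u = 0`. -/
lemma cross3_key (a b u : EuclideanSpace ℝ (Fin 3)) (ha : ‖a‖ = 1)
    (hab : (inner ℝ a b : ℝ) = 0) :
    (inner ℝ a u : ℝ) • cross3 a b - (inner ℝ (cross3 a b) u : ℝ) • a + cross3 b u = 0 := by
  have ha' : (inner ℝ a a : ℝ) = 1 := by
    rw [real_inner_self_eq_norm_sq, ha]; norm_num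
  rw [inner3'] at hab ha'
  ext i
  fin_cases i <;>
    simp [cross3_apply', inner3', Fin.sum_univ_three, PiLp.add_apply, PiLp.sub_apply,
      PiLp.smul_apply, smul_eq_mul]
  · linear_combination (b 2 * u 1 - b 1 * u 2) * ha' + (a 1 * u 2 - a 2 * u 1) * hab
  · linear_combination (b 0 * u 2 - b 2 * u 0) * ha' + (a 2 * u 0 - a 0 * u 2) * hab
  · linear_combination (b 1 * u 0 - b 0 * u 1) * ha' + (a 0 * u 1 - a 1 * u 0) * hab

/-- Theorem 1.3 (Darboux-frame version): if the projection `Γ_u` has no inflections,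
i.e. `κ_g·⟨n, u⟩` never vanishes, then the tangent lines of `Γ_u` cover the whole plane,
so `Γ_u` is not locally star-shaped. -/
theorem stmt1
    (Γ n : ℝ → EuclideanSpace ℝ (Fin 3)) (κg τg : ℝ → ℝ)
    (hΓ : ContDiff ℝ 2 Γ) (hΓper : Function.Periodic Γ (2 * π))
    (hT1 : ∀ t, ‖deriv Γ t‖ = 1)
    (hn : ContDiff ℝ 1 n) (hnper : Function.Periodic n (2 * π))
    (hn1 : ∀ t, ‖n t‖ = 1)
    (hnT : ∀ t, (inner ℝ (n t) (deriv Γ t) : ℝ) = 0)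
    (hκcont : Continuous κg) (hκper : Function.Periodic κg (2 * π))
    (hτcont : Continuous τg) (hτper : Function.Periodic τg (2 * π))
    (hτ : ∀ t, τg t ≠ 0)
    (hDarboux1 : ∀ t, deriv (deriv Γ) t = κg t • cross3 (n t) (deriv Γ t))
    (hDarboux2 : ∀ t, deriv (fun s => cross3 (n s) (deriv Γ s)) t
      = -κg t • deriv Γ t + τg t • n t)
    (hDarboux3 : ∀ t, deriv n t = -τg t • cross3 (n t) (deriv Γ t))
    (u : EuclideanSpace ℝ (Fin 3)) (hu : ‖u‖ = 1)
    (hinfl : ∀ t, κg t * (inner ℝ (n t) u : ℝ) ≠ 0) :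
    ∀ p : EuclideanSpace ℝ (Fin 3), ∃ t ∈ Set.Icc (0 : ℝ) (2 * π),
      (inner ℝ (Γ t - p) (cross3 (deriv Γ t) u) : ℝ) = 0 := by
  intro p
  by_contra hcon
  push_neg at hcon
  set F : ℝ → ℝ := fun t => (inner ℝ (Γ t - p) (cross3 (deriv Γ t) u) : ℝ) with hF
  set A : ℝ → ℝ := fun t => (inner ℝ (Γ t - p) (n t) : ℝ) with hA
  set m : ℝ → ℝ := fun t => (inner ℝ (n t) u : ℝ) with hm
  have hΓdiff : Differentiable ℝ Γ := hΓ.differentiable (by norm_num)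
  have hndiff : Differentiable ℝ n := hn.differentiable (by norm_num)
  have hm0 : ∀ t, m t ≠ 0 := by
    intro t h
    exact hinfl t (by rw [hm] at h; simp only at h; rw [h, mul_zero])
  have hnD : ∀ t, HasDerivAt n (-τg t • cross3 (n t) (deriv Γ t)) t := fun t => by
    rw [← hDarboux3 t]; exact (hndiff t).hasDerivAt
  have hΓD : ∀ t, HasDerivAt (fun s => Γ s - p) (deriv Γ t) t := fun t =>
    ((hΓdiff t).hasDerivAt).sub_const p
  have hAD : ∀ t, HasDerivAt A
      (-(τg t * (inner ℝ (Γ t - p) (cross3 (n t) (deriv Γ t)) : ℝ))) t := by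
    intro t
    have hd := (hΓD t).inner ℝ (hnD t)
    refine hd.congr_deriv ?_; symm
    have h0 : (inner ℝ (deriv Γ t) (n t) : ℝ) = 0 := by
      rw [real_inner_comm]; exact hnT t
    rw [real_inner_smul_right, h0]; ring
  have hmD : ∀ t, HasDerivAt m
      (-(τg t * (inner ℝ (cross3 (n t) (deriv Γ t)) u : ℝ))) t := by
    intro t
    have hd := (hnD t).inner ℝ (hasDerivAt_const t u)
    refine hd.congr_deriv ?_; symm
    rw [inner_zero_right, real_inner_smul_left]; ring
  set q : ℝ → ℝ := fun t => A t / m t with hq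
  have hqD : ∀ t, HasDerivAt q (τg t * F t / (m t) ^ 2) t := by
    intro t
    have hd := (hAD t).div (hmD t) (hm0 t)
    refine hd.congr_deriv ?_; symm
    have hkey := cross3_key (n t) (deriv Γ t) u (hn1 t) (hnT t)
    have h2 : (inner ℝ (Γ t - p)
        ((inner ℝ (n t) u : ℝ) • cross3 (n t) (deriv Γ t)
          - (inner ℝ (cross3 (n t) (deriv Γ t)) u : ℝ) • n t
          + cross3 (deriv Γ t) u) : ℝ) = 0 := by
      rw [hkey]; exact inner_zero_right _
    rw [inner_add_right, inner_sub_right, real_inner_smul_right, real_inner_smul_right] at h2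
    have hFt : F t = (inner ℝ (Γ t - p) (cross3 (deriv Γ t) u) : ℝ) := rfl
    have hAt : A t = (inner ℝ (Γ t - p) (n t) : ℝ) := rfl
    have hmt : m t = (inner ℝ (n t) u : ℝ) := rfl
    rw [← hFt, ← hAt, ← hmt] at h2
    congr 1
    linear_combination (τg t) * h2
  -- periodicity
  have h2pi : (0:ℝ) < 2 * π := by positivity
  have hTper : Function.Periodic (deriv Γ) (2 * π) := by
    intro x
    rw [← deriv_comp_add_const]
    congr 1
    funext y
    exact hΓper y
  have hFper : Function.Periodic F (2 * π) := by
    intro x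
    show (inner ℝ (Γ (x + 2 * π) - p) (cross3 (deriv Γ (x + 2 * π)) u) : ℝ) = _
    rw [hΓper x, hTper x]
  have hFne : ∀ t, F t ≠ 0 := by
    intro t
    obtain ⟨y, hy, hEq⟩ := hFper.exists_mem_Ico₀ h2pi t
    rw [hEq]
    exact hcon y ⟨hy.1, hy.2.le⟩
  have hqper : q (2 * π) = q 0 := by
    have hA2 : A (0 + 2 * π) = A 0 := by
      show (inner ℝ (Γ (0 + 2 * π) - p) (n (0 + 2 * π)) : ℝ) = _
      rw [hΓper 0, hnper 0]
    have hm2 : m (0 + 2 * π) = m 0 := by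
      show (inner ℝ (n (0 + 2 * π)) u : ℝ) = _
      rw [hnper 0]
    show A (2 * π) / m (2 * π) = A 0 / m 0
    rw [show (2 * π) = 0 + 2 * π by ring, hA2, hm2]
  -- the derivative of q never vanishes, so q is strictly monotone: contradiction
  have hne : ∀ x ∈ Set.univ, τg x * F x / (m x) ^ 2 ≠ (0:ℝ) := fun x _ =>
    div_ne_zero (mul_ne_zero (hτ x) (hFne x)) (pow_ne_zero _ (hm0 x))
  rcases hasDerivWithinAt_forall_lt_or_forall_gt_of_forall_ne convex_univ
      (fun x _ => (hqD x).hasDerivWithinAt) hne with h | h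
  · have hanti : StrictAnti q := strictAnti_of_deriv_neg (fun x => by
      rw [(hqD x).deriv]; exact h x trivial)
    exact absurd hqper (ne_of_lt (hanti h2pi))
  · have hmono : StrictMono q := strictMono_of_deriv_pos (fun x => by
      rw [(hqD x).deriv]; exact h x trivial)
    exact absurd hqper (ne_of_gt (hmono h2pi))
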